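/- arXiv:2308.11005 — 4 statements merged into one kernel-verified Lean document; each statement's English description precedes it below -/
import Mathlib

section
/- The Dehn tribracket of a group G, with operation [x,y,z] = y x⁻¹ z, is entropic if and only if G is abelian. -/
def dehnBr {G : Type*} [Group G] (x y z : G) : G := y * x⁻¹ * z

theorem dehn_entropic_iff_abelian {G : Type*} [Group G] :
    (∀ x y z u v w a b c : G,
        dehnBr (dehnBr x y z) (dehnBr u v w) (dehnBr a b c) =
          dehnBr (dehnBr x u a) (dehnBr y v b) (dehnBr z w c)) ↔
      ∀ g h : G, g * h = h * g := by
  constructor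
  · intro h g k
    have := h 1 1 1 g⁻¹ 1 1 1 k 1
    simpa [dehnBr] using this
  · intro hc x y z u v w a b c
    let _ : CommGroup G := { mul_comm := hc }
    simp only [dehnBr, mul_inv_rev, inv_inv]
    simp only [mul_assoc]
    simp [mul_comm, mul_left_comm, mul_assoc]
end

section
/- If T is a tribracket and X is an entropic tribracket, then the set Hom(T,X) of tribracket homomorphisms is closed under the pointwise operation: for homomorphisms f,g,h: T → X, the map t ↦ [f(t),g(t),h(t)]_X is again a tribracket homomorphism. -/
structure Tribracket (X : Type*) where
  br : X → X → X → X
  exu_left : ∀ x y z, ∃! a, br a x y = z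
  exu_mid : ∀ x y z, ∃! b, br x b y = z
  exu_right : ∀ x y z, ∃! c, br x y c = z
  tri1 : ∀ x y z w, br y (br x y z) (br x y w) = br z (br x y z) (br x z w)
  tri2 : ∀ x y z w, br z (br x y z) (br x z w) = br w (br x y w) (br x z w)

def Tribracket.IsEntropic {X : Type*} (T : Tribracket X) : Prop :=
  ∀ x y z u v w a b c,
    T.br (T.br x y z) (T.br u v w) (T.br a b c) =
    T.br (T.br x u a) (T.br y v b) (T.br z w c)

def IsTriHom {X Y : Type*} (TX : Tribracket X) (TY : Tribracket Y) (f : X → Y) : Prop :=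
  ∀ x y z, f (TX.br x y z) = TY.br (f x) (f y) (f z)

theorem homset_closed_pointwise {T X : Type*} (TT : Tribracket T) (TX : Tribracket X)
    (hX : TX.IsEntropic) (f g h : T → X)
    (hf : IsTriHom TT TX f) (hg : IsTriHom TT TX g) (hh : IsTriHom TT TX h) :
    IsTriHom TT TX (fun t => TX.br (f t) (g t) (h t)) := by
  intro x y z
  simp only []
  rw [hf, hg, hh, hX]
end

section
/- If T is a tribracket and X is an entropic tribracket, then Hom(T,X) with the pointwise operation [f,g,h](t) = [f(t),g(t),h(t)]_X is itself an entropic tribracket. -/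
theorem homset_entropic_tribracket {T X : Type*} (TT : Tribracket T) (TX : Tribracket X)
    (hX : TX.IsEntropic) :
    ∃ H : Tribracket {f : T → X // IsTriHom TT TX f},
      (∀ f g h : {f : T → X // IsTriHom TT TX f},
        (H.br f g h).1 = fun t => TX.br (f.1 t) (g.1 t) (h.1 t)) ∧ H.IsEntropic := by
  classical
  have homBr : ∀ f g h : {f : T → X // IsTriHom TT TX f},
      IsTriHom TT TX (fun t => TX.br (f.1 t) (g.1 t) (h.1 t)) := by
    intro f g h x y z
    simp only [f.2 x y z, g.2 x y z, h.2 x y z]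
    exact hX _ _ _ _ _ _ _ _ _
  refine ⟨⟨fun f g h => ⟨fun t => TX.br (f.1 t) (g.1 t) (h.1 t), homBr f g h⟩,
      ?_, ?_, ?_, ?_, ?_⟩,
    fun f g h => rfl,
    fun _ _ _ _ _ _ _ _ _ => Subtype.ext (funext fun t => hX _ _ _ _ _ _ _ _ _)⟩
  · -- exu_left
    intro x y z
    set a : T → X := fun t => (TX.exu_left (x.1 t) (y.1 t) (z.1 t)).choose with ha
    have hspec : ∀ t, TX.br (a t) (x.1 t) (y.1 t) = z.1 t :=
      fun t => (TX.exu_left (x.1 t) (y.1 t) (z.1 t)).choose_spec.1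
    have huniq : ∀ t (c : X), TX.br c (x.1 t) (y.1 t) = z.1 t → c = a t :=
      fun t c hc => (TX.exu_left (x.1 t) (y.1 t) (z.1 t)).choose_spec.2 c hc
    have hhom : IsTriHom TT TX a := by
      intro p q r
      refine (huniq (TT.br p q r) _ ?_).symm
      rw [x.2 p q r, y.2 p q r, z.2 p q r, hX]
      rw [hspec p, hspec q, hspec r]
    refine ⟨⟨a, hhom⟩, Subtype.ext (funext fun t => hspec t), ?_⟩
    intro c hc
    refine Subtype.ext (funext fun t => huniq t _ ?_)
    exact congrFun (congrArg Subtype.val hc) t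
  · -- exu_mid
    intro x y z
    set a : T → X := fun t => (TX.exu_mid (x.1 t) (y.1 t) (z.1 t)).choose with ha
    have hspec : ∀ t, TX.br (x.1 t) (a t) (y.1 t) = z.1 t :=
      fun t => (TX.exu_mid (x.1 t) (y.1 t) (z.1 t)).choose_spec.1
    have huniq : ∀ t (c : X), TX.br (x.1 t) c (y.1 t) = z.1 t → c = a t :=
      fun t c hc => (TX.exu_mid (x.1 t) (y.1 t) (z.1 t)).choose_spec.2 c hc
    have hhom : IsTriHom TT TX a := by
      intro p q r
      refine (huniq (TT.br p q r) _ ?_).symm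
      rw [x.2 p q r, y.2 p q r, z.2 p q r, hX]
      rw [hspec p, hspec q, hspec r]
    refine ⟨⟨a, hhom⟩, Subtype.ext (funext fun t => hspec t), ?_⟩
    intro c hc
    refine Subtype.ext (funext fun t => huniq t _ ?_)
    exact congrFun (congrArg Subtype.val hc) t
  · -- exu_right
    intro x y z
    set a : T → X := fun t => (TX.exu_right (x.1 t) (y.1 t) (z.1 t)).choose with ha
    have hspec : ∀ t, TX.br (x.1 t) (y.1 t) (a t) = z.1 t :=
      fun t => (TX.exu_right (x.1 t) (y.1 t) (z.1 t)).choose_spec.1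
    have huniq : ∀ t (c : X), TX.br (x.1 t) (y.1 t) c = z.1 t → c = a t :=
      fun t c hc => (TX.exu_right (x.1 t) (y.1 t) (z.1 t)).choose_spec.2 c hc
    have hhom : IsTriHom TT TX a := by
      intro p q r
      refine (huniq (TT.br p q r) _ ?_).symm
      rw [x.2 p q r, y.2 p q r, z.2 p q r, hX]
      rw [hspec p, hspec q, hspec r]
    refine ⟨⟨a, hhom⟩, Subtype.ext (funext fun t => hspec t), ?_⟩
    intro c hc
    refine Subtype.ext (funext fun t => huniq t _ ?_)
    exact congrFun (congrArg Subtype.val hc) t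
  · intro x y z w
    exact Subtype.ext (funext fun t => TX.tri1 _ _ _ _)
  · intro x y z w
    exact Subtype.ext (funext fun t => TX.tri2 _ _ _ _)
end

section
/- Let T be a tribracket and X an entropic tribracket. For any homomorphisms f,g,h: T → X, the unique pointwise solution a: T → X of [a(t),f(t),g(t)]_X = h(t) for all t ∈ T (existing by left-invertibility of the tribracket operation in X) is itself a tribracket homomorphism. -/
theorem pointwise_left_solution_is_hom {T X : Type*} (TT : Tribracket T) (TX : Tribracket X)
    (hX : TX.IsEntropic) (f g h : T → X)
    (hf : IsTriHom TT TX f) (hg : IsTriHom TT TX g) (hh : IsTriHom TT TX h)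
    (a : T → X) (ha : ∀ t, TX.br (a t) (f t) (g t) = h t) :
    IsTriHom TT TX a := by
  intro x y z
  obtain ⟨w, hw, huniq⟩ := TX.exu_left (f (TT.br x y z)) (g (TT.br x y z)) (h (TT.br x y z))
  have h1 : a (TT.br x y z) = w := huniq _ (ha _)
  have h2 : TX.br (a x) (a y) (a z) = w := by
    apply huniq
    rw [hf, hg, hh, hX, ha, ha, ha]
  rw [h1, h2]
end
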